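/- Let a < b be real numbers and let u : ℝ → ℝ be upper semicontinuous on [a,b] (UpperSemicontinuousOn u (Icc a b)). Suppose u satisfies the viscosity subsolution property for u'' = 0 in (a,b): for every x₀ ∈ (a,b), every δ > 0 and every twice continuously differentiable φ : ℝ → ℝ (ContDiff ℝ 2 φ) with φ x₀ = u x₀ and u x ≤ φ x for all x ∈ (x₀ - δ, x₀ + δ), one has deriv (deriv φ) x₀ ≥ 0. Then u is convex on [a,b], i.e. ConvexOn ℝ (Icc a b) u. -/

import Mathlib

open Set

private lemma usc_exists_max {K : Set ℝ} (hK : IsCompact K) (hne : K.Nonempty)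
    {g : ℝ → ℝ} (hg : UpperSemicontinuousOn g K) :
    ∃ x ∈ K, ∀ y ∈ K, g y ≤ g x := by
  by_contra h
  push_neg at h
  have key : ∃ y ∈ K, ∀ z ∈ K ∩ K, g z < g y := by
    refine hK.induction_on (p := fun t => ∃ y ∈ K, ∀ z ∈ t ∩ K, g z < g y) ?_ ?_ ?_ ?_
    · obtain ⟨y, hy⟩ := hne
      exact ⟨y, hy, fun z hz => absurd hz.1 (notMem_empty z)⟩
    · rintro s t hst ⟨y, hy, hlt⟩
      exact ⟨y, hy, fun z hz => hlt z ⟨hst hz.1, hz.2⟩⟩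
    · rintro s t ⟨y₁, hy₁, h₁⟩ ⟨y₂, hy₂, h₂⟩
      rcases le_total (g y₁) (g y₂) with hle | hle
      · exact ⟨y₂, hy₂, fun z hz => by
          rcases hz.1 with h' | h'
          · exact lt_of_lt_of_le (h₁ z ⟨h', hz.2⟩) hle
          · exact h₂ z ⟨h', hz.2⟩⟩
      · exact ⟨y₁, hy₁, fun z hz => by
          rcases hz.1 with h' | h'
          · exact h₁ z ⟨h', hz.2⟩
          · exact lt_of_lt_of_le (h₂ z ⟨h', hz.2⟩) hle⟩
    · intro x hx
      obtain ⟨y, hyK, hxy⟩ := h x hx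
      exact ⟨{z | g z < g y}, hg x hx (g y) hxy, y, hyK, fun z hz => hz.1⟩
  obtain ⟨y, hyK, hlt⟩ := key
  exact absurd (hlt y ⟨hyK, hyK⟩) (lt_irrefl _)

private lemma key_below_chord (a b : ℝ) (u : ℝ → ℝ)
    (husc : UpperSemicontinuousOn u (Set.Icc a b))
    (hvisc : ∀ x₀ ∈ Set.Ioo a b, ∀ δ : ℝ, 0 < δ → ∀ φ : ℝ → ℝ, ContDiff ℝ 2 φ →
      φ x₀ = u x₀ → (∀ x ∈ Set.Ioo (x₀ - δ) (x₀ + δ), u x ≤ φ x) →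
      0 ≤ deriv (deriv φ) x₀)
    (p q : ℝ) (hp : p ∈ Icc a b) (hq : q ∈ Icc a b) (hpq : p < q)
    (z : ℝ) (hz : z ∈ Icc p q) :
    u z ≤ u p + (u q - u p) / (q - p) * (z - p) := by
  by_contra hcon
  push_neg at hcon
  have hqp : (0:ℝ) < q - p := by linarith
  have hne : q - p ≠ 0 := ne_of_gt hqp
  set s : ℝ := (u q - u p) / (q - p) with hs
  clear_value s
  set L : ℝ → ℝ := fun t => u p + s * (t - p) with hL
  clear_value L
  set d : ℝ := u z - L z with hd
  clear_value d
  have hdpos : 0 < d := by rw [hd]; simp only [hL]; linarith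
  set ε : ℝ := d / (2 * (q - p) ^ 2) with hε
  clear_value ε
  have hεpos : 0 < ε := by rw [hε]; positivity
  have hεeq : ε * (q - p) ^ 2 = d / 2 := by rw [hε]; field_simp
  set g : ℝ → ℝ := fun t => u t - L t + ε * ((t - p) * (t - q)) with hg
  clear_value g
  have hIcc_sub : Icc p q ⊆ Icc a b := Icc_subset_Icc hp.1 hq.2
  -- g is upper semicontinuous on Icc p q
  have hgusc : UpperSemicontinuousOn g (Icc p q) := by
    have h1 : UpperSemicontinuousOn u (Icc p q) := husc.mono hIcc_sub
    have h2 : ContinuousOn (fun t => -L t + ε * ((t - p) * (t - q))) (Icc p q) := by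
      simp only [hL]
      fun_prop
    have := h1.add h2.upperSemicontinuousOn
    convert this using 2 with t
    · rfl
    simp only [hg]
    ring
  obtain ⟨t₀, ht₀K, ht₀max⟩ := usc_exists_max isCompact_Icc ⟨p, le_refl p, hpq.le⟩ hgusc
  have hgp : g p = 0 := by simp [hg, hL]
  have hgq : g q = 0 := by
    simp only [hg, hL, hs]
    field_simp
    ring
  have hzbd : (z - p) * (z - q) ≥ -((q - p)^2) := by nlinarith [hz.1, hz.2]
  have hgz : g z ≥ d / 2 := by
    have h1 : ε * (-((q - p)^2)) ≤ ε * ((z - p) * (z - q)) :=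
      mul_le_mul_of_nonneg_left hzbd hεpos.le
    have hdz : d = u z - L z := hd
    simp only [hg]
    nlinarith [h1, hεeq, hdz]
  have hgt₀pos : 0 < g t₀ := lt_of_lt_of_le (by linarith) (ht₀max z hz)
  have ht₀p : p < t₀ := by
    rcases lt_or_eq_of_le ht₀K.1 with h | h
    · exact h
    · exfalso; rw [← h, hgp] at hgt₀pos; exact lt_irrefl _ hgt₀pos
  have ht₀q : t₀ < q := by
    rcases lt_or_eq_of_le ht₀K.2 with h | h
    · exact h
    · exfalso; rw [h, hgq] at hgt₀pos; exact lt_irrefl _ hgt₀pos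
  set δ : ℝ := min (t₀ - p) (q - t₀) with hδ
  clear_value δ
  have hδ1 : δ ≤ t₀ - p := by rw [hδ]; exact min_le_left _ _
  have hδ2 : δ ≤ q - t₀ := by rw [hδ]; exact min_le_right _ _
  have hδpos : 0 < δ := by rw [hδ]; exact lt_min (by linarith) (by linarith)
  -- the test function
  set φ : ℝ → ℝ := fun t => u p + s * (t - p) - ε * ((t - p) * (t - q)) + g t₀ with hφ
  clear_value φ
  have hφC2 : ContDiff ℝ 2 φ := by
    rw [hφ]
    apply ContDiff.add
    apply ContDiff.sub
    · exact contDiff_const.add (contDiff_const.mul ((contDiff_id.sub contDiff_const)))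
    · exact contDiff_const.mul (((contDiff_id.sub contDiff_const)).mul
        ((contDiff_id.sub contDiff_const)))
    · exact contDiff_const
  have hφt₀ : φ t₀ = u t₀ := by
    simp only [hφ, hg, hL]
    ring
  have hφge : ∀ x ∈ Ioo (t₀ - δ) (t₀ + δ), u x ≤ φ x := by
    intro x hx
    have hxK : x ∈ Icc p q := ⟨by linarith [hx.1], by linarith [hx.2]⟩
    have := ht₀max x hxK
    simp only [hg, hL] at this
    simp only [hφ, hg, hL]
    linarith
  have ht₀ab : t₀ ∈ Ioo a b := ⟨lt_of_le_of_lt hp.1 ht₀p, lt_of_lt_of_le ht₀q hq.2⟩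
  have hderiv : deriv (deriv φ) t₀ = -(ε * 2) := by
    have hd1 : ∀ t : ℝ, HasDerivAt φ (s - ε * ((t - q) + (t - p))) t := by
      intro t
      rw [hφ]
      have h1 : HasDerivAt (fun t : ℝ => t - p) 1 t := (hasDerivAt_id t).sub_const p
      have h2 : HasDerivAt (fun t : ℝ => t - q) 1 t := (hasDerivAt_id t).sub_const q
      have h3 : HasDerivAt (fun t : ℝ => (t - p) * (t - q)) (1 * (t - q) + (t - p) * 1) t :=
        h1.mul h2
      have h4 : HasDerivAt (fun t : ℝ => u p + s * (t - p)) (s * 1) t :=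
        (h1.const_mul s).const_add (u p)
      have := ((h4.sub (h3.const_mul ε)).add_const (g t₀))
      convert this using 1
      · rfl
      · rfl
      · rfl
      ring
    have hD : deriv φ = fun t => s - ε * ((t - q) + (t - p)) := by
      funext t; exact (hd1 t).deriv
    rw [hD]
    have h5 : HasDerivAt (fun t : ℝ => s - ε * ((t - q) + (t - p))) (-(ε * 2)) t₀ := by
      have h2 : HasDerivAt (fun t : ℝ => t - q) 1 t₀ := (hasDerivAt_id t₀).sub_const q
      have h1 : HasDerivAt (fun t : ℝ => t - p) 1 t₀ := (hasDerivAt_id t₀).sub_const p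
      have := (((h2.add h1).const_mul ε)).const_sub s
      convert this using 1
      · rfl
      · rfl
      · rfl
      ring
    exact h5.deriv
  have hfinal := hvisc t₀ ht₀ab δ hδpos φ hφC2 hφt₀ hφge
  rw [hderiv] at hfinal
  linarith

theorem viscosity_subsolution_is_convex (a b : ℝ) (hab : a < b) (u : ℝ → ℝ)
    (husc : UpperSemicontinuousOn u (Set.Icc a b))
    (hvisc : ∀ x₀ ∈ Set.Ioo a b, ∀ δ : ℝ, 0 < δ → ∀ φ : ℝ → ℝ, ContDiff ℝ 2 φ →
      φ x₀ = u x₀ → (∀ x ∈ Set.Ioo (x₀ - δ) (x₀ + δ), u x ≤ φ x) →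
      0 ≤ deriv (deriv φ) x₀) :
    ConvexOn ℝ (Set.Icc a b) u := by
  have main : ∀ p ∈ Icc a b, ∀ q ∈ Icc a b, p ≤ q → ∀ lam mu : ℝ, 0 ≤ lam → 0 ≤ mu →
      lam + mu = 1 → u (lam * p + mu * q) ≤ lam * u p + mu * u q := by
    intro p hp q hq hpq lam mu hlam hmu hsum
    rcases eq_or_lt_of_le hpq with heq | hlt
    · subst heq
      have h1 : lam * p + mu * p = p := by linear_combination p * hsum
      have h2 : lam * u p + mu * u p = u p := by linear_combination (u p) * hsum
      rw [h1]
      exact h2.ge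
    · set z := lam * p + mu * q with hz
      have hc1 : lam * p + mu * p = p := by linear_combination p * hsum
      have hc2 : lam * q + mu * q = q := by linear_combination q * hsum
      have hmuq : 0 ≤ mu * (q - p) := mul_nonneg hmu (by linarith)
      have hlamq : 0 ≤ lam * (q - p) := mul_nonneg hlam (by linarith)
      have hzmem : z ∈ Icc p q := ⟨by nlinarith [hc1, hmuq], by nlinarith [hc2, hlamq]⟩
      have hkey := key_below_chord a b u husc hvisc p q hp hq hlt z hzmem
      have hzp : z - p = mu * (q - p) := by rw [hz]; linear_combination p * hsum
      have hqp : (0:ℝ) < q - p := by linarith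
      have hne : q - p ≠ 0 := ne_of_gt hqp
      have hdiv : (u q - u p) / (q - p) * (mu * (q - p)) = mu * (u q - u p) := by
        field_simp
      calc u z ≤ u p + (u q - u p) / (q - p) * (z - p) := hkey
        _ = u p + mu * (u q - u p) := by rw [hzp, hdiv]
        _ = lam * u p + mu * u q := by linear_combination -(u p) * hsum
  refine ⟨convex_Icc a b, ?_⟩
  intro p hp q hq lam mu hlam hmu hsum
  simp only [smul_eq_mul]
  rcases le_total p q with h | h
  · exact main p hp q hq h lam mu hlam hmu hsum
  · have hm := main q hq p hp h mu lam hmu hlam (by linarith)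
    calc u (lam * p + mu * q) = u (mu * q + lam * p) := by ring_nf
      _ ≤ mu * u q + lam * u p := hm
      _ = lam * u p + mu * u q := by ring
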